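/- There exists a constant c > 0 depending only on n and σ with the following property: if U is nonnegative and continuous on {X = (x,t) : |X| ≤ 2, t ≥ 0}, C² on 𝔅_2^+, and satisfies ΔU(X) + ((1−2σ)/t)·∂_t U(X) = 0 for all X ∈ 𝔅_2^+, then inf over 𝔅_1^+ of U ≥ c · inf over B_2 of u, where u(x) := U(x,0). -/

import Mathlib

open scoped Topology MeasureTheory RealInnerProductSpace
open Filter MeasureTheory

noncomputable section

/-- Points of `ℝ^{n+1}`, written `X = (x, t)` with `x ∈ ℝⁿ` and `t ∈ ℝ`. -/
abbrev Pt (n : ℕ) := EuclideanSpace ℝ (Fin n) × ℝ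

/-- The Euclidean norm on `ℝ^{n+1} = ℝⁿ × ℝ`. -/
def enorm' {n : ℕ} (X : Pt n) : ℝ := Real.sqrt (‖X.1‖ ^ 2 + X.2 ^ 2)

/-- Partial derivative in the last (`t`) direction. -/
def dt {n : ℕ} (U : Pt n → ℝ) (X : Pt n) : ℝ := fderiv ℝ U X (0, 1)

/-- Second derivative in the direction `v`. -/
def d2 {n : ℕ} (U : Pt n → ℝ) (X v : Pt n) : ℝ :=
  fderiv ℝ (fun Y => fderiv ℝ U Y v) X v

/-- The Laplacian on `ℝ^{n+1}`. -/
def lapl {n : ℕ} (U : Pt n → ℝ) (X : Pt n) : ℝ :=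
  (∑ i : Fin n, d2 U X (EuclideanSpace.single i (1 : ℝ), (0 : ℝ))) + d2 U X (0, 1)

/-- `U` is a nonnegative solution of the extension problem on the punctured half-ball
`𝔅_R^+`: it is nonnegative and continuous on `{|X| ≤ R, t ≥ 0} \ {0}`, `C²` on `𝔅_R^+`,
satisfies `ΔU + ((1-2σ)/t) ∂_t U = 0` there, and satisfies the nonlinear Neumann condition
`lim_{t→0⁺} t^{1-2σ} ∂_t U(x,t) = -u(x)^{(n+2σ)/(n-2σ)}` for `x ∈ B_R \ {0}`. -/
def ExtSol (n : ℕ) (σ R : ℝ) (U : Pt n → ℝ) : Prop :=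
  (∀ X : Pt n, enorm' X ≤ R → 0 ≤ X.2 → X ≠ 0 → 0 ≤ U X) ∧
  ContinuousOn U ({X : Pt n | enorm' X ≤ R ∧ 0 ≤ X.2} \ {0}) ∧
  ContDiffOn ℝ 2 U {X : Pt n | enorm' X < R ∧ 0 < X.2} ∧
  (∀ X : Pt n, enorm' X < R → 0 < X.2 →
    lapl U X + ((1 - 2 * σ) / X.2) * dt U X = 0) ∧
  (∀ x : EuclideanSpace ℝ (Fin n), ‖x‖ < R → x ≠ 0 →
    Tendsto (fun t : ℝ => t ^ (1 - 2 * σ) * dt U (x, t)) (𝓝[>] 0)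
      (𝓝 (-(U (x, 0) ^ (((n : ℝ) + 2 * σ) / ((n : ℝ) - 2 * σ))))))

namespace S12

variable {n : ℕ}

/-- scaffold: compute `dt`. -/
lemma dt_eq {f : Pt n → ℝ} {X : Pt n} {D : Pt n →L[ℝ] ℝ} (hf : HasFDerivAt f D X) :
    dt f X = D (0, 1) := by
  rw [dt, hf.fderiv]

/-- scaffold: compute `d2`. -/
lemma d2_eq {f : Pt n → ℝ} {X v : Pt n} {D : Pt n → Pt n →L[ℝ] ℝ} {g : Pt n → ℝ}
    {D2 : Pt n →L[ℝ] ℝ}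
    (hf : ∀ᶠ Y in 𝓝 X, HasFDerivAt f (D Y) Y)
    (hg : ∀ Y, D Y v = g Y)
    (hE : HasFDerivAt g D2 X) : d2 f X v = D2 v := by
  have h1 : (fun Y => fderiv ℝ f Y v) =ᶠ[𝓝 X] g := by
    filter_upwards [hf] with Y hY
    rw [hY.fderiv, hg]
  show fderiv ℝ (fun Y => fderiv ℝ f Y v) X v = D2 v
  rw [h1.fderiv_eq, hE.fderiv]

/-- 1D second derivative test at a local minimum. -/
lemma second_deriv_nonneg {g : ℝ → ℝ} (hg : ContDiffAt ℝ 2 g 0) (hmin : IsLocalMin g 0) :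
    0 ≤ deriv (deriv g) 0 := by
  by_contra hcon
  push_neg at hcon
  obtain ⟨u, hu_mem, hu⟩ := hg.contDiffOn le_rfl (by simp)
  obtain ⟨ε₀, hε₀, hball⟩ := Metric.mem_nhds_iff.1 hu_mem
  set O := Metric.ball (0:ℝ) ε₀ with hO
  have hOopen : IsOpen O := Metric.isOpen_ball
  have h00 : (0:ℝ) ∈ O := by simp [hO, hε₀]
  have hO0 : O ∈ 𝓝 (0:ℝ) := hOopen.mem_nhds h00
  have hgO : ContDiffOn ℝ 2 g O := hu.mono hball
  have hd1 : ContDiffOn ℝ 1 (deriv g) O := by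
    have h2 : ContDiffOn ℝ ((1:WithTop ℕ∞) + 1) g O := by
      have e : ((1:WithTop ℕ∞) + 1) = 2 := by norm_num
      rw [e]; exact hgO
    exact ((contDiffOn_succ_iff_deriv_of_isOpen hOopen).1 h2).2.2
  have hdd : DifferentiableAt ℝ (deriv g) 0 :=
    (hd1.differentiableOn one_ne_zero).differentiableAt hO0
  have hDD : HasDerivAt (deriv g) (deriv (deriv g) 0) 0 := hdd.hasDerivAt
  have hslope := hasDerivAt_iff_tendsto_slope.1 hDD
  have hev : ∀ᶠ x in 𝓝[≠] (0:ℝ), slope (deriv g) 0 x < 0 :=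
    hslope.eventually_lt_const hcon
  have hev' : ∀ᶠ x in 𝓝 (0:ℝ), x ∈ Set.Ioi (0:ℝ) → slope (deriv g) 0 x < 0 := by
    have h1 := eventually_nhdsWithin_iff.1 hev
    filter_upwards [h1] with x hx hx'
    exact hx (by simpa using (ne_of_gt hx'))
  have hminev : ∀ᶠ x in 𝓝 (0:ℝ), g 0 ≤ g x := hmin
  obtain ⟨ε₁, hε₁, H1⟩ := Metric.eventually_nhds_iff.1 (hev'.and hminev)
  set δ := min (ε₁/2) (ε₀/2) with hδ
  have hδpos : 0 < δ := by positivity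
  have hδ1 : δ < ε₁ := by
    have := min_le_left (ε₁/2) (ε₀/2); linarith
  have hδ0 : δ < ε₀ := by
    have := min_le_right (ε₁/2) (ε₀/2); linarith
  have hsub : Set.Icc (0:ℝ) δ ⊆ O := by
    intro x hx
    simp only [hO, Metric.mem_ball, Real.dist_eq, sub_zero]
    rw [abs_of_nonneg hx.1]
    linarith [hx.2]
  have h0' : deriv g 0 = 0 := hmin.deriv_eq_zero
  have hanti : StrictAntiOn g (Set.Icc 0 δ) := by
    apply strictAntiOn_of_deriv_neg (convex_Icc 0 δ) (hgO.continuousOn.mono hsub)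
    intro x hx
    rw [interior_Icc] at hx
    have hx1 : dist x (0:ℝ) < ε₁ := by
      rw [Real.dist_eq, sub_zero, abs_of_pos hx.1]
      linarith [hx.2]
    have hs := (H1 hx1).1 hx.1
    rw [slope_def_field, h0', sub_zero, sub_zero] at hs
    rcases div_neg_iff.1 hs with ⟨_, hneg⟩ | ⟨hnum, _⟩
    · exact absurd hx.1 (not_lt.2 hneg.le)
    · exact hnum
  have hδm : dist δ (0:ℝ) < ε₁ := by
    rw [Real.dist_eq, sub_zero, abs_of_pos hδpos]; exact hδ1
  have hlt : g δ < g 0 :=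
    hanti (Set.left_mem_Icc.2 hδpos.le) (Set.right_mem_Icc.2 hδpos.le) hδpos
  have hge : g 0 ≤ g δ := (H1 hδm).2
  linarith

/-- Directional second derivative test at an interior local min. -/
lemma d2_nonneg_of_isLocalMin {f : Pt n → ℝ} {X : Pt n} {O : Set (Pt n)}
    (hO : IsOpen O) (hX : X ∈ O) (hf : ContDiffOn ℝ 2 f O) (hmin : IsLocalMin f X)
    (v : Pt n) : 0 ≤ d2 f X v := by
  have hOn : O ∈ 𝓝 X := hO.mem_nhds hX
  set ℓ : ℝ → Pt n := fun s => X + s • v with hℓdef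
  have hℓd : ∀ s : ℝ, HasDerivAt ℓ v s := by
    intro s
    have := ((hasDerivAt_id s).smul_const v).const_add X
    simpa [hℓdef] using this
  have hℓcd : ContDiff ℝ 2 ℓ := contDiff_const.add (contDiff_id.smul contDiff_const)
  have hℓc : Continuous ℓ := hℓcd.continuous
  have hℓ0 : ℓ 0 = X := by simp [hℓdef]
  have htend : Tendsto ℓ (𝓝 0) (𝓝 X) := by
    rw [← hℓ0]; exact hℓc.continuousAt
  have hming : IsLocalMin (f ∘ ℓ) 0 := by
    apply IsMinFilter.comp_tendsto _ htend
    rw [hℓ0]; exact hmin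
  have hfa : ContDiffAt ℝ 2 f (ℓ 0) := by rw [hℓ0]; exact hf.contDiffAt hOn
  have hga : ContDiffAt ℝ 2 (f ∘ ℓ) 0 := hfa.comp 0 hℓcd.contDiffAt
  have hDf : DifferentiableOn ℝ f O := hf.differentiableOn (by norm_num)
  have hder_ev : ∀ᶠ s in 𝓝 (0:ℝ), HasDerivAt (f ∘ ℓ) (fderiv ℝ f (ℓ s) v) s := by
    have hev : ∀ᶠ s in 𝓝 (0:ℝ), ℓ s ∈ O := by
      have : Tendsto ℓ (𝓝 0) (𝓝 X) := htend
      exact this.eventually (hO.eventually_mem hX)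
    filter_upwards [hev] with s hs
    have hdiff : DifferentiableAt ℝ f (ℓ s) := hDf.differentiableAt (hO.mem_nhds hs)
    exact hdiff.hasFDerivAt.comp_hasDerivAt s (hℓd s)
  have hEq : deriv (f ∘ ℓ) =ᶠ[𝓝 (0:ℝ)] fun s => fderiv ℝ f (ℓ s) v := by
    filter_upwards [hder_ev] with s hs; exact hs.deriv
  have hfd1 : ContDiffOn ℝ 1 (fderiv ℝ f) O := hf.fderiv_of_isOpen hO (by norm_num)
  have hdF : DifferentiableAt ℝ (fderiv ℝ f) X :=
    (hfd1.differentiableOn one_ne_zero).differentiableAt hOn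
  have hGd : DifferentiableAt ℝ (fun Y => fderiv ℝ f Y v) X :=
    hdF.clm_apply (differentiableAt_const v)
  have hkey : HasDerivAt (fun s => fderiv ℝ f (ℓ s) v) (d2 f X v) 0 := by
    have h1 : HasFDerivAt (fun Y => fderiv ℝ f Y v)
        (fderiv ℝ (fun Y => fderiv ℝ f Y v) X) X := hGd.hasFDerivAt
    have h2 : HasFDerivAt (fun Y => fderiv ℝ f Y v)
        (fderiv ℝ (fun Y => fderiv ℝ f Y v) X) (ℓ 0) := by rw [hℓ0]; exact h1
    exact h2.comp_hasDerivAt 0 (hℓd 0)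
  have hfin : deriv (deriv (f ∘ ℓ)) 0 = d2 f X v := by
    rw [hEq.deriv_eq, hkey.deriv]
  rw [← hfin]
  exact second_deriv_nonneg hga hming

/-- Weak minimum principle on a closed cylinder, for strict supersolutions of `L`. -/
lemma minPrinciple (σ : ℝ) {x₀ : EuclideanSpace ℝ (Fin n)} {ρ t₁ t₂ : ℝ}
    {w : Pt n → ℝ} {A : ℝ}
    (hcont : ContinuousOn w (Metric.closedBall x₀ ρ ×ˢ Set.Icc t₁ t₂))
    (hC2 : ContDiffOn ℝ 2 w (Metric.ball x₀ ρ ×ˢ Set.Ioo t₁ t₂))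
    (hsub : ∀ X ∈ Metric.ball x₀ ρ ×ˢ Set.Ioo t₁ t₂,
      lapl w X + ((1 - 2*σ)/X.2) * dt w X < 0)
    (hbd : ∀ X ∈ (Metric.closedBall x₀ ρ ×ˢ Set.Icc t₁ t₂) \
        (Metric.ball x₀ ρ ×ˢ Set.Ioo t₁ t₂), A ≤ w X) :
    ∀ X ∈ Metric.closedBall x₀ ρ ×ˢ Set.Icc t₁ t₂, A ≤ w X := by
  intro X hXK
  set K := Metric.closedBall x₀ ρ ×ˢ Set.Icc t₁ t₂ with hK
  set O := Metric.ball x₀ ρ ×ˢ Set.Ioo t₁ t₂ with hOdef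
  have hOopen : IsOpen O := Metric.isOpen_ball.prod isOpen_Ioo
  have hOK : O ⊆ K := Set.prod_mono Metric.ball_subset_closedBall Set.Ioo_subset_Icc_self
  have hKc : IsCompact K := (isCompact_closedBall _ _).prod isCompact_Icc
  obtain ⟨X₀, hX₀K, hX₀min⟩ := hKc.exists_isMinOn ⟨X, hXK⟩ hcont
  by_cases hX₀O : X₀ ∈ O
  · exfalso
    have hKnhds : K ∈ 𝓝 X₀ := mem_of_superset (hOopen.mem_nhds hX₀O) hOK
    have hloc : IsLocalMin w X₀ := hX₀min.isLocalMin hKnhds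
    have hdt : dt w X₀ = 0 := by rw [dt, hloc.fderiv_eq_zero]; rfl
    have hl : 0 ≤ lapl w X₀ := by
      rw [lapl]
      have h1 : ∀ i : Fin n, 0 ≤ d2 w X₀ (EuclideanSpace.single i (1:ℝ), (0:ℝ)) := fun i =>
        d2_nonneg_of_isLocalMin hOopen hX₀O hC2 hloc _
      have h2 : 0 ≤ d2 w X₀ (0, 1) :=
        d2_nonneg_of_isLocalMin hOopen hX₀O hC2 hloc _
      exact add_nonneg (Finset.sum_nonneg fun i _ => h1 i) h2
    have hlt := hsub X₀ hX₀O
    rw [hdt, mul_zero, add_zero] at hlt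
    linarith
  · exact le_trans (hbd X₀ ⟨hX₀K, hX₀O⟩) (hX₀min hXK)

/-- coordinate projections on `Pt n` -/
def Pj (i : Fin n) : Pt n →L[ℝ] ℝ :=
  (EuclideanSpace.proj i).comp (ContinuousLinearMap.fst ℝ (EuclideanSpace ℝ (Fin n)) ℝ)

def sn : Pt n →L[ℝ] ℝ := ContinuousLinearMap.snd ℝ (EuclideanSpace ℝ (Fin n)) ℝ

@[simp] lemma Pj_apply (i : Fin n) (v : Pt n) : Pj i v = v.1 i := rfl
@[simp] lemma sn_apply (v : Pt n) : sn v = v.2 := rfl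

/-- helper: replace the derivative by a pointwise-equal CLM -/
lemma HasFDerivAt.congr_clm {f : Pt n → ℝ} {X : Pt n} {L L' : Pt n →L[ℝ] ℝ}
    (h : HasFDerivAt f L X) (he : ∀ v, L' v = L v) : HasFDerivAt f L' X := by
  have : L' = L := ContinuousLinearMap.ext he
  rw [this]; exact h

/-- the coordinate quadratic `∑ (xᵢ - cᵢ)²` as a function on `Pt n` -/
def Qf (c : EuclideanSpace ℝ (Fin n)) : Pt n → ℝ := fun X => ∑ i, (X.1 i - c i)^2

def DQ (c : EuclideanSpace ℝ (Fin n)) (Y : Pt n) : Pt n →L[ℝ] ℝ :=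
  ∑ i, (2*(Y.1 i - c i)) • Pj i

lemma DQ_apply (c : EuclideanSpace ℝ (Fin n)) (Y v : Pt n) :
    DQ c Y v = ∑ i, 2*(Y.1 i - c i) * v.1 i := by
  simp [DQ]

lemma hasFDerivAt_Qf (c : EuclideanSpace ℝ (Fin n)) (Y : Pt n) :
    HasFDerivAt (Qf c) (DQ c Y) Y := by
  apply HasFDerivAt.fun_sum
  intro i _
  have h1 : HasDerivAt (fun u : ℝ => (u - c i)^2) (2*(Y.1 i - c i)) (Y.1 i) := by
    have := ((hasDerivAt_id (Y.1 i)).sub_const (c i)).fun_pow 2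
    simpa using this
  exact h1.comp_hasFDerivAt Y (Pj i).hasFDerivAt

lemma Qf_contDiff (c : EuclideanSpace ℝ (Fin n)) : ContDiff ℝ 2 (Qf c) := by
  apply ContDiff.sum
  intro i _
  exact ((Pj i).contDiff.sub contDiff_const).pow 2

/-- Step A barrier (+ U-comparison auxiliary): the function
`gA X = m - 4m·Q(x₀,X) + (m·bb+ε)·t² - m·ββ·t^(2σ)`. -/
def gA (σ m bb ββ ε : ℝ) (x₀ : EuclideanSpace ℝ (Fin n)) : Pt n → ℝ := fun X =>
  m - (4*m) * Qf x₀ X + (m*bb + ε) * X.2^2 - (m*ββ) * X.2 ^ (2*σ)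

/-- derivative family for `gA`, valid at points with `Y.2 ≠ 0` -/
def DgA (σ m bb ββ ε : ℝ) (x₀ : EuclideanSpace ℝ (Fin n)) (Y : Pt n) : Pt n →L[ℝ] ℝ :=
  ((0 - (4*m) • DQ x₀ Y) + (2*(m*bb + ε)*Y.2) • sn)
    - ((m*ββ)*((2*σ)*Y.2^(2*σ-1))) • sn

lemma hasFDerivAt_gA {σ m bb ββ ε : ℝ} {x₀ : EuclideanSpace ℝ (Fin n)} {Y : Pt n}
    (hY : Y.2 ≠ 0) : HasFDerivAt (gA σ m bb ββ ε x₀) (DgA σ m bb ββ ε x₀ Y) Y := by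
  have h₁ : HasFDerivAt (fun Z : Pt n => (4*m) * Qf x₀ Z) ((4*m) • DQ x₀ Y) Y :=
    (hasFDerivAt_Qf x₀ Y).const_mul (4*m)
  have h₂ : HasFDerivAt (fun Z : Pt n => m - (4*m) * Qf x₀ Z) (0 - (4*m) • DQ x₀ Y) Y :=
    (hasFDerivAt_const m Y).sub h₁
  have hq0 : HasDerivAt (fun u : ℝ => (m*bb + ε) * u^2) (2*(m*bb + ε)*Y.2) Y.2 := by
    have := (hasDerivAt_pow 2 Y.2).const_mul (m*bb + ε)
    refine this.congr_deriv ?_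
    push_cast
    ring
  have hq : HasFDerivAt (fun Z : Pt n => (m*bb + ε) * Z.2^2) ((2*(m*bb + ε)*Y.2) • sn) Y :=
    hq0.comp_hasFDerivAt Y sn.hasFDerivAt
  have hr0 : HasDerivAt (fun u : ℝ => (m*ββ) * u ^ (2*σ)) ((m*ββ)*((2*σ)*Y.2^(2*σ-1))) Y.2 :=
    (Real.hasDerivAt_rpow_const (Or.inl hY)).const_mul (m*ββ)
  have hr : HasFDerivAt (fun Z : Pt n => (m*ββ) * Z.2 ^ (2*σ))
      (((m*ββ)*((2*σ)*Y.2^(2*σ-1))) • sn) Y :=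
    hr0.comp_hasFDerivAt Y sn.hasFDerivAt
  exact (h₂.add hq).sub hr

lemma gA_facts (σ m bb ββ ε : ℝ) (x₀ : EuclideanSpace ℝ (Fin n)) (X : Pt n)
    (hX : 0 < X.2) :
    dt (gA σ m bb ββ ε x₀) X = 2*(m*bb + ε)*X.2 - (m*ββ)*((2*σ)*X.2^(2*σ-1)) ∧
    (∀ j : Fin n, d2 (gA σ m bb ββ ε x₀) X (EuclideanSpace.single j (1:ℝ), (0:ℝ)) = -(8*m)) ∧
    d2 (gA σ m bb ββ ε x₀) X ((0:EuclideanSpace ℝ (Fin n)), (1:ℝ)) =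
      2*(m*bb + ε) - (m*ββ)*((2*σ)*((2*σ-1)*X.2^(2*σ-2))) := by
  have hop : IsOpen {Y : Pt n | 0 < Y.2} := isOpen_lt continuous_const continuous_snd
  have hev : ∀ᶠ Y in 𝓝 X, HasFDerivAt (gA σ m bb ββ ε x₀) (DgA σ m bb ββ ε x₀ Y) Y := by
    filter_upwards [hop.eventually_mem (show X ∈ {Y : Pt n | 0 < Y.2} from hX)] with Y hY
    exact hasFDerivAt_gA (ne_of_gt hY)
  refine ⟨?_, ?_, ?_⟩
  · rw [dt_eq (hev.self_of_nhds)]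
    simp [DgA, DQ_apply]
  · intro j
    have hg : ∀ Y : Pt n, DgA σ m bb ββ ε x₀ Y (EuclideanSpace.single j (1:ℝ), (0:ℝ)) =
        (-(8*m)) * (Y.1 j) + (8*m) * (x₀ j) := by
      intro Y
      simp only [DgA, ContinuousLinearMap.sub_apply, ContinuousLinearMap.add_apply,
        ContinuousLinearMap.smul_apply, ContinuousLinearMap.zero_apply, sn_apply,
        DQ_apply, smul_eq_mul]
      have : ∀ i : Fin n, 2*(Y.1 i - x₀ i) * ((EuclideanSpace.single j (1:ℝ), (0:ℝ)).1 i)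
          = if i = j then 2*(Y.1 i - x₀ i) else 0 := by
        intro i
        by_cases h : i = j <;> simp [EuclideanSpace.single_apply, h]
      rw [Finset.sum_congr rfl fun i _ => this i, Finset.sum_ite_eq' Finset.univ j
        (fun i => 2*(Y.1 i - x₀ i))]
      simp
      ring
    have hE : HasFDerivAt (fun Y : Pt n => (-(8*m)) * (Y.1 j) + (8*m) * (x₀ j))
        ((-(8*m)) • Pj j) X := by
      have h1 : HasFDerivAt (fun Y : Pt n => (-(8*m)) * (Y.1 j)) ((-(8*m)) • Pj j) X :=
        (Pj j).hasFDerivAt.const_mul (-(8*m))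
      simpa using h1.add_const ((8*m) * (x₀ j))
    rw [d2_eq hev hg hE]
    simp [EuclideanSpace.single_apply]
  · have hg : ∀ Y : Pt n, DgA σ m bb ββ ε x₀ Y ((0:EuclideanSpace ℝ (Fin n)), (1:ℝ)) =
        2*(m*bb + ε)*Y.2 - (m*ββ)*((2*σ)*Y.2^(2*σ-1)) := by
      intro Y
      simp [DgA, DQ_apply]
    have hr0 : HasDerivAt (fun u : ℝ => (m*ββ)*((2*σ)*u^(2*σ-1)))
        ((m*ββ)*((2*σ)*((2*σ-1)*X.2^(2*σ-2)))) X.2 := by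
      have h1 : HasDerivAt (fun u : ℝ => u^(2*σ-1)) ((2*σ-1)*X.2^(2*σ-1-1)) X.2 :=
        Real.hasDerivAt_rpow_const (Or.inl (ne_of_gt hX))
      have h2 := (h1.const_mul (2*σ)).const_mul (m*ββ)
      rw [show (2*σ-1-1) = 2*σ-2 by ring] at h2
      exact h2
    have hq0 : HasDerivAt (fun u : ℝ => 2*(m*bb + ε)*u) (2*(m*bb + ε)) X.2 := by
      simpa using (hasDerivAt_id X.2).const_mul (2*(m*bb + ε))
    have hE : HasFDerivAt (fun Y : Pt n => 2*(m*bb + ε)*Y.2 - (m*ββ)*((2*σ)*Y.2^(2*σ-1)))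
        ((2*(m*bb + ε) - (m*ββ)*((2*σ)*((2*σ-1)*X.2^(2*σ-2)))) • sn) X := by
      have := (hq0.sub hr0).comp_hasFDerivAt X sn.hasFDerivAt
      exact this
    rw [d2_eq hev hg hE]
    simp

/-- `gA` is `C²` on any subset of `{t > 0}`. -/
lemma gA_contDiffOn (σ m bb ββ ε : ℝ) (x₀ : EuclideanSpace ℝ (Fin n)) {O : Set (Pt n)}
    (hsub : O ⊆ {X : Pt n | 0 < X.2}) : ContDiffOn ℝ 2 (gA σ m bb ββ ε x₀) O := by
  intro X hX
  have h1 : ContDiffAt ℝ 2 (fun Y : Pt n => Y.2 ^ (2*σ)) X :=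
    (Real.contDiffAt_rpow_const_of_ne (ne_of_gt (hsub hX))).comp X contDiff_snd.contDiffAt
  have c1 : ContDiffAt ℝ 2 (fun Y : Pt n => m - (4*m) * Qf x₀ Y) X :=
    contDiffAt_const.sub (contDiffAt_const.mul (Qf_contDiff x₀).contDiffAt)
  have c2 : ContDiffAt ℝ 2 (fun Y : Pt n => (m*bb + ε) * Y.2^2) X :=
    contDiffAt_const.mul ((contDiff_snd.pow 2).contDiffAt)
  have c3 : ContDiffAt ℝ 2 (fun Y : Pt n => (m*ββ) * Y.2 ^ (2*σ)) X :=
    contDiffAt_const.mul h1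
  exact (((c1.add c2).sub c3)).contDiffWithinAt

lemma gA_continuous (σ m bb ββ ε : ℝ) (hσ : 0 < σ) (x₀ : EuclideanSpace ℝ (Fin n)) :
    Continuous (gA σ m bb ββ ε x₀) := by
  have h1 : Continuous (fun u : ℝ => u ^ (2*σ)) :=
    continuous_iff_continuousAt.2 fun x =>
      Real.continuousAt_rpow_const x _ (Or.inr (by positivity))
  exact ((continuous_const.sub (continuous_const.mul (Qf_contDiff x₀).continuous)).add
      (continuous_const.mul (continuous_snd.pow 2))).sub
    (continuous_const.mul (h1.comp continuous_snd))

/-- the operator `L` applied to `gA`. -/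
lemma gA_L (σ m bb ββ ε : ℝ) (x₀ : EuclideanSpace ℝ (Fin n)) (X : Pt n) (hX : 0 < X.2) :
    lapl (gA σ m bb ββ ε x₀) X + ((1 - 2*σ)/X.2) * dt (gA σ m bb ββ ε x₀) X
      = -(8*m)*n + 4*(1-σ)*(m*bb + ε) := by
  obtain ⟨h1, h2, h3⟩ := gA_facts σ m bb ββ ε x₀ X hX
  rw [lapl]
  rw [Finset.sum_congr rfl fun j _ => h2 j, Finset.sum_const, Finset.card_univ,
    Fintype.card_fin]
  rw [h3, h1]
  have hxx : X.2^(2*σ-1) = X.2^(2*σ-2)*X.2 := by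
    rw [show (2*σ-1) = (2*σ-2)+1 by ring, Real.rpow_add hX, Real.rpow_one]
  rw [hxx]
  have ht : X.2 ≠ 0 := ne_of_gt hX
  field_simp
  ring

/-- Step B barrier combined with the `ε`-term. -/
def gB (m2 c₀ k K ττ ββ ε : ℝ) : Pt n → ℝ := fun X =>
  (m2/c₀^2) * ((c₀ - Qf 0 X)^2 * Real.exp (-(k*(X.2 - ττ))))
    - (m2*ββ) * (1 - Real.exp (-(K*(X.2 - ττ)))) + ε * X.2^2

def DgB (m2 c₀ k K ττ ββ ε : ℝ) (Y : Pt n) : Pt n →L[ℝ] ℝ :=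
  (m2/c₀^2) • (((c₀ - Qf 0 Y)^2) • ((Real.exp (-(k*(Y.2 - ττ))) * (-k)) • sn)
      + (Real.exp (-(k*(Y.2 - ττ)))) • ((-(2*(c₀ - Qf 0 Y))) • DQ 0 Y))
    - (m2*ββ) • ((K * Real.exp (-(K*(Y.2 - ττ)))) • sn)
    + (2*ε*Y.2) • sn

lemma hasDerivAt_exp_lin (a ττ : ℝ) (t : ℝ) :
    HasDerivAt (fun u : ℝ => Real.exp (-(a*(u - ττ)))) (Real.exp (-(a*(t - ττ))) * (-a)) t := by
  have h1 : HasDerivAt (fun u : ℝ => -(a*(u - ττ))) (-a) t := by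
    have := (((hasDerivAt_id t).sub_const ττ).const_mul a).fun_neg
    simpa using this
  simpa using h1.exp

lemma hasFDerivAt_gB (m2 c₀ k K ττ ββ ε : ℝ) (Y : Pt n) :
    HasFDerivAt (gB m2 c₀ k K ττ ββ ε) (DgB m2 c₀ k K ττ ββ ε Y) Y := by
  have hP : HasFDerivAt (fun Z : Pt n => (c₀ - Qf 0 Z)^2)
      ((-(2*(c₀ - Qf 0 Y))) • DQ 0 Y) Y := by
    have h0 : HasDerivAt (fun u : ℝ => (c₀ - u)^2) (-(2*(c₀ - Qf 0 Y))) (Qf 0 Y) := by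
      have h := ((hasDerivAt_id (Qf 0 Y)).const_sub c₀).pow 2
      simp only [id_eq] at h
      refine h.congr_deriv ?_
      push_cast
      ring
    exact h0.comp_hasFDerivAt Y (hasFDerivAt_Qf 0 Y)
  have hR : HasFDerivAt (fun Z : Pt n => Real.exp (-(k*(Z.2 - ττ))))
      ((Real.exp (-(k*(Y.2 - ττ))) * (-k)) • sn) Y :=
    (hasDerivAt_exp_lin k ττ Y.2).comp_hasFDerivAt Y sn.hasFDerivAt
  have hPR := hP.mul hR
  have hA := hPR.const_mul (m2/c₀^2)
  have hB : HasFDerivAt (fun Z : Pt n => (m2*ββ) * (1 - Real.exp (-(K*(Z.2 - ττ)))))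
      ((m2*ββ) • ((K * Real.exp (-(K*(Y.2 - ττ)))) • sn)) Y := by
    have h1 : HasDerivAt (fun u : ℝ => 1 - Real.exp (-(K*(u - ττ))))
        (K * Real.exp (-(K*(Y.2 - ττ)))) Y.2 := by
      have := (hasDerivAt_exp_lin K ττ Y.2).const_sub 1
      refine this.congr_deriv ?_
      ring
    exact (h1.comp_hasFDerivAt Y sn.hasFDerivAt).const_mul (m2*ββ)
  have hC : HasFDerivAt (fun Z : Pt n => ε * Z.2^2) ((2*ε*Y.2) • sn) Y := by
    have h1 : HasDerivAt (fun u : ℝ => ε * u^2) (2*ε*Y.2) Y.2 := by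
      have := (hasDerivAt_pow 2 Y.2).const_mul ε
      refine this.congr_deriv ?_
      push_cast
      ring
    exact h1.comp_hasFDerivAt Y sn.hasFDerivAt
  exact (hA.sub hB).add hC

lemma DQ_apply_single (c : EuclideanSpace ℝ (Fin n)) (Y : Pt n) (j : Fin n) :
    DQ c Y (EuclideanSpace.single j (1:ℝ), (0:ℝ)) = 2*(Y.1 j - c j) := by
  rw [DQ_apply]
  have : ∀ i : Fin n, 2*(Y.1 i - c i) * ((EuclideanSpace.single j (1:ℝ), (0:ℝ)).1 i)
      = if i = j then 2*(Y.1 i - c i) else 0 := by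
    intro i
    by_cases h : i = j <;> simp [EuclideanSpace.single_apply, h]
  rw [Finset.sum_congr rfl fun i _ => this i, Finset.sum_ite_eq' Finset.univ j
    (fun i => 2*(Y.1 i - c i))]
  simp

lemma gB_contDiff (m2 c₀ k K ττ ββ ε : ℝ) : ContDiff ℝ 2 (gB m2 c₀ k K ττ ββ ε (n := n)) := by
  have hexp : ∀ a : ℝ, ContDiff ℝ 2 (fun Y : Pt n => Real.exp (-(a*(Y.2 - ττ)))) := fun a =>
    Real.contDiff_exp.comp ((contDiff_const.mul (contDiff_snd.sub contDiff_const)).neg)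
  exact ((contDiff_const.mul (((contDiff_const.sub (Qf_contDiff 0)).pow 2).mul (hexp k))).sub
    (contDiff_const.mul (contDiff_const.sub (hexp K)))).add
    (contDiff_const.mul (contDiff_snd.pow 2))

lemma gB_facts (m2 c₀ k K ττ ββ ε : ℝ) (X : Pt n) :
    dt (gB m2 c₀ k K ττ ββ ε) X
      = (m2/c₀^2) * ((c₀ - Qf 0 X)^2 * (Real.exp (-(k*(X.2 - ττ))) * (-k)))
        - (m2*ββ) * (K * Real.exp (-(K*(X.2 - ττ)))) + 2*ε*X.2 ∧
    (∀ j : Fin n, d2 (gB m2 c₀ k K ττ ββ ε) X (EuclideanSpace.single j (1:ℝ), (0:ℝ))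
      = (m2/c₀^2) * Real.exp (-(k*(X.2 - ττ))) * (8*(X.1 j)^2 - 4*(c₀ - Qf 0 X))) ∧
    d2 (gB m2 c₀ k K ττ ββ ε) X ((0:EuclideanSpace ℝ (Fin n)), (1:ℝ))
      = (m2/c₀^2) * ((c₀ - Qf 0 X)^2 * (Real.exp (-(k*(X.2 - ττ))) * k^2))
        + (m2*ββ) * (K^2 * Real.exp (-(K*(X.2 - ττ)))) + 2*ε := by
  have hev : ∀ᶠ Y in 𝓝 X, HasFDerivAt (gB m2 c₀ k K ττ ββ ε)
      (DgB m2 c₀ k K ττ ββ ε Y) Y :=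
    Filter.Eventually.of_forall (hasFDerivAt_gB m2 c₀ k K ττ ββ ε)
  refine ⟨?_, ?_, ?_⟩
  · rw [dt_eq (hev.self_of_nhds)]
    simp [DgB, DQ_apply]
  · intro j
    have hg : ∀ Y : Pt n, DgB m2 c₀ k K ττ ββ ε Y (EuclideanSpace.single j (1:ℝ), (0:ℝ))
        = (m2/c₀^2) * Real.exp (-(k*(Y.2 - ττ))) * (-(2*(c₀ - Qf 0 Y))) * (2*(Y.1 j)) := by
      intro Y
      simp only [DgB, ContinuousLinearMap.add_apply, ContinuousLinearMap.sub_apply,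
        ContinuousLinearMap.smul_apply, sn_apply, smul_eq_mul, DQ_apply_single]
      simp
      ring
    -- second derivative of the normalized first-derivative function
    have hf1 : HasFDerivAt (fun Y : Pt n => (m2/c₀^2) * Real.exp (-(k*(Y.2 - ττ))))
        ((m2/c₀^2) • ((Real.exp (-(k*(X.2 - ττ))) * (-k)) • sn)) X :=
      ((hasDerivAt_exp_lin k ττ X.2).comp_hasFDerivAt X sn.hasFDerivAt).const_mul (m2/c₀^2)
    have hf2 : HasFDerivAt (fun Y : Pt n => -(2*(c₀ - Qf 0 Y)))
        (-((2:ℝ) • ((0:Pt n →L[ℝ] ℝ) - DQ 0 X))) X :=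
      (((hasFDerivAt_const c₀ X).sub (hasFDerivAt_Qf 0 X)).const_mul 2).neg
    have hf3 : HasFDerivAt (fun Y : Pt n => 2*(Y.1 j)) ((2:ℝ) • Pj j) X :=
      (Pj j).hasFDerivAt.const_mul 2
    have hE := (hf1.mul hf2).mul hf3
    rw [d2_eq hev hg hE]
    simp only [ContinuousLinearMap.add_apply, ContinuousLinearMap.sub_apply,
      ContinuousLinearMap.smul_apply, ContinuousLinearMap.neg_apply,
      ContinuousLinearMap.zero_apply, sn_apply, Pj_apply, smul_eq_mul, DQ_apply_single]
    simp [EuclideanSpace.single_apply]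
    ring
  · have hg : ∀ Y : Pt n, DgB m2 c₀ k K ττ ββ ε Y ((0:EuclideanSpace ℝ (Fin n)), (1:ℝ))
        = (m2/c₀^2) * ((c₀ - Qf 0 Y)^2 * (Real.exp (-(k*(Y.2 - ττ))) * (-k)))
          - (m2*ββ) * (K * Real.exp (-(K*(Y.2 - ττ)))) + 2*ε*Y.2 := by
      intro Y
      simp [DgB, DQ_apply]
    have hP : HasFDerivAt (fun Z : Pt n => (c₀ - Qf 0 Z)^2)
        ((-(2*(c₀ - Qf 0 X))) • DQ 0 X) X := by
      have h0 : HasDerivAt (fun u : ℝ => (c₀ - u)^2) (-(2*(c₀ - Qf 0 X))) (Qf 0 X) := by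
        have h := ((hasDerivAt_id (Qf 0 X)).const_sub c₀).pow 2
        simp only [id_eq] at h
        refine h.congr_deriv ?_
        push_cast
        ring
      exact h0.comp_hasFDerivAt X (hasFDerivAt_Qf 0 X)
    have hr2 : HasFDerivAt (fun Y : Pt n => Real.exp (-(k*(Y.2 - ττ))) * (-k))
        ((Real.exp (-(k*(X.2 - ττ))) * (-k) * (-k)) • sn) X := by
      have h1 : HasDerivAt (fun u : ℝ => Real.exp (-(k*(u - ττ))) * (-k))
          (Real.exp (-(k*(X.2 - ττ))) * (-k) * (-k)) X.2 :=
        (hasDerivAt_exp_lin k ττ X.2).mul_const (-k)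
      exact h1.comp_hasFDerivAt X sn.hasFDerivAt
    have hT1 := (hP.mul hr2).const_mul (m2/c₀^2)
    have hT2 : HasFDerivAt (fun Y : Pt n => (m2*ββ) * (K * Real.exp (-(K*(Y.2 - ττ)))))
        ((m2*ββ) • ((K * (Real.exp (-(K*(X.2 - ττ))) * (-K))) • sn)) X := by
      have h1 : HasDerivAt (fun u : ℝ => K * Real.exp (-(K*(u - ττ))))
          (K * (Real.exp (-(K*(X.2 - ττ))) * (-K))) X.2 :=
        (hasDerivAt_exp_lin K ττ X.2).const_mul K
      exact (h1.comp_hasFDerivAt X sn.hasFDerivAt).const_mul (m2*ββ)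
    have hT3 : HasFDerivAt (fun Y : Pt n => 2*ε*Y.2) ((2*ε) • sn) X := by
      have h1 : HasDerivAt (fun u : ℝ => 2*ε*u) (2*ε) X.2 := by
        simpa using (hasDerivAt_id X.2).const_mul (2*ε)
      exact h1.comp_hasFDerivAt X sn.hasFDerivAt
    have hE := (hT1.sub hT2).add hT3
    rw [d2_eq hev hg hE]
    simp only [ContinuousLinearMap.add_apply, ContinuousLinearMap.sub_apply,
      ContinuousLinearMap.smul_apply, sn_apply, smul_eq_mul, DQ_apply]
    simp
    ring

set_option maxHeartbeats 1000000 in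
/-- Lower bound for `L gB` on the Step-B cylinder. -/
lemma gB_L (σ m2 c₀ k K ττ ββ ε : ℝ) (X : Pt n)
    (hm2 : 0 ≤ m2) (hββ : 0 ≤ ββ) (hc₀1 : 1 ≤ c₀) (hττ : 0 < ττ) (ht : ττ ≤ X.2)
    (hσ0 : 0 < σ) (hKτ : 1/ττ ≤ K) (hk : 1/ττ + (n+2) ≤ k) :
    4*(1-σ)*ε ≤ lapl (gB m2 c₀ k K ττ ββ ε) X
      + ((1 - 2*σ)/X.2) * dt (gB m2 c₀ k K ττ ββ ε) X := by
  obtain ⟨hdt, hd2x, hd2t⟩ := gB_facts m2 c₀ k K ττ ββ ε X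
  have hXpos : 0 < X.2 := lt_of_lt_of_le hττ ht
  have hX2 : X.2 ≠ 0 := ne_of_gt hXpos
  have hc₀ : (0:ℝ) < c₀ := lt_of_lt_of_le one_pos hc₀1
  set q : ℝ := Qf 0 X with hqdef
  set e1 : ℝ := Real.exp (-(k*(X.2 - ττ))) with he1
  set e2 : ℝ := Real.exp (-(K*(X.2 - ττ))) with he2
  have he1p : 0 < e1 := Real.exp_pos _
  have he2p : 0 < e2 := Real.exp_pos _
  -- sum of second x-derivatives
  have hq' : ∑ j, (X.1 j)^2 = q := by simp [hqdef, Qf]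
  have hsum : ∑ j : Fin n, d2 (gB m2 c₀ k K ττ ββ ε) X (EuclideanSpace.single j (1:ℝ), (0:ℝ))
      = (m2/c₀^2) * e1 * (8*q - 4*n*(c₀ - q)) := by
    rw [Finset.sum_congr rfl fun j _ => hd2x j, ← Finset.mul_sum]
    congr 1
    rw [Finset.sum_sub_distrib, ← Finset.mul_sum, hq', Finset.sum_const, Finset.card_univ,
      Fintype.card_fin]
    push_cast
    ring
  -- bound on (1-2σ)/X.2
  have hinv : (1 - 2*σ)/X.2 ≤ 1/ττ :=
    div_le_div₀ zero_le_one (by linarith) hττ ht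
  have hkpos : 0 < k := by
    have : (0:ℝ) < 1/ττ + (n+2) := by positivity
    linarith
  have hKpos : 0 < K := lt_of_lt_of_le (by positivity) hKτ
  have h1 : (n+2 : ℝ) ≤ k - (1 - 2*σ)/X.2 := by linarith
  have h2 : (n+2 : ℝ) ≤ k := by
    have : (0:ℝ) < 1/ττ := by positivity
    linarith
  have h3 : ((n:ℝ)+2)*((n:ℝ)+2) ≤ k*(k - (1 - 2*σ)/X.2) :=
    mul_le_mul h2 h1 (by positivity) hkpos.le
  have hKK : 0 ≤ K - (1 - 2*σ)/X.2 := by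
    have : (1 - 2*σ)/X.2 ≤ K := le_trans hinv hKτ
    linarith
  -- the x-bracket inequality
  have hbr : 0 ≤ (8*q - 4*n*(c₀ - q)) + (c₀ - q)^2*(k^2 - (1 - 2*σ)/X.2*k) := by
    have hA : 0 ≤ (c₀ - q)^2*(k*(k - (1 - 2*σ)/X.2) - ((n:ℝ)+2)*((n:ℝ)+2)) :=
      mul_nonneg (sq_nonneg _) (by linarith)
    nlinarith [sq_nonneg (((n:ℝ)+2)*(c₀ - q) - 4*c₀), hc₀, sq_nonneg (c₀ - q),
      mul_nonneg (sq_nonneg (c₀ - q)) (le_trans (by positivity : (0:ℝ) ≤ ((n:ℝ)+2)*((n:ℝ)+2)) h3)]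
  -- put everything together
  have hsplit : lapl (gB m2 c₀ k K ττ ββ ε) X
      + ((1 - 2*σ)/X.2) * dt (gB m2 c₀ k K ττ ββ ε) X
      = (m2/c₀^2) * e1 * ((8*q - 4*n*(c₀ - q)) + (c₀ - q)^2*(k^2 - (1 - 2*σ)/X.2*k))
        + (m2*ββ) * e2 * K * (K - (1 - 2*σ)/X.2) + 4*(1-σ)*ε := by
    rw [lapl, hsum, hd2t, hdt]
    field_simp
    ring
  rw [hsplit]
  have hA1 : 0 ≤ (m2/c₀^2) * e1 * ((8*q - 4*n*(c₀ - q)) + (c₀ - q)^2*(k^2 - (1 - 2*σ)/X.2*k)) :=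
    mul_nonneg (mul_nonneg (by positivity) he1p.le) hbr
  have hA2 : 0 ≤ (m2*ββ) * e2 * K * (K - (1 - 2*σ)/X.2) :=
    mul_nonneg (mul_nonneg (mul_nonneg (mul_nonneg hm2 hββ) he2p.le) hKpos.le) hKK
  linarith

/-- enorm' bound helpers -/

lemma enorm'_le (X : Pt n) {a b r : ℝ} (hx : ‖X.1‖ ≤ a) (ht0 : 0 ≤ X.2) (ht : X.2 ≤ b)
    (h : a^2 + b^2 ≤ r^2) (hr : 0 ≤ r) : enorm' X ≤ r := by
  rw [show enorm' X = Real.sqrt (‖X.1‖ ^ 2 + X.2 ^ 2) from rfl, Real.sqrt_le_iff]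
  refine ⟨hr, ?_⟩
  nlinarith [norm_nonneg X.1]

lemma enorm'_lt (X : Pt n) {a b r : ℝ} (hx : ‖X.1‖ ≤ a) (ht0 : 0 ≤ X.2) (ht : X.2 ≤ b)
    (h : a^2 + b^2 < r^2) (hr : 0 < r) : enorm' X < r := by
  rw [show enorm' X = Real.sqrt (‖X.1‖ ^ 2 + X.2 ^ 2) from rfl, Real.sqrt_lt' hr]
  nlinarith [norm_nonneg X.1]

lemma norm_fst_le_enorm' (X : Pt n) : ‖X.1‖ ≤ enorm' X := by
  rw [show enorm' X = Real.sqrt (‖X.1‖ ^ 2 + X.2 ^ 2) from rfl]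
  have h1 := Real.sqrt_le_sqrt (show ‖X.1‖^2 ≤ ‖X.1‖^2 + X.2^2 by nlinarith [sq_nonneg X.2])
  rwa [Real.sqrt_sq (norm_nonneg _)] at h1

lemma snd_le_enorm' (X : Pt n) : X.2 ≤ enorm' X := by
  rw [show enorm' X = Real.sqrt (‖X.1‖ ^ 2 + X.2 ^ 2) from rfl]
  have h1 := Real.sqrt_le_sqrt (show X.2^2 ≤ ‖X.1‖^2 + X.2^2 by nlinarith [sq_nonneg ‖X.1‖])
  calc X.2 ≤ |X.2| := le_abs_self _
    _ = Real.sqrt (X.2^2) := (Real.sqrt_sq_eq_abs _).symm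
    _ ≤ _ := h1

lemma Qf_eq (c : EuclideanSpace ℝ (Fin n)) (X : Pt n) : Qf c X = ‖X.1 - c‖^2 := by
  rw [EuclideanSpace.norm_eq, Real.sq_sqrt (by positivity)]
  unfold Qf
  apply Finset.sum_congr rfl
  intro i _
  simp [sq_abs]

lemma Qf_nonneg (c : EuclideanSpace ℝ (Fin n)) (X : Pt n) : 0 ≤ Qf c X :=
  Finset.sum_nonneg fun i _ => sq_nonneg _

lemma Qf_self (c : EuclideanSpace ℝ (Fin n)) (t : ℝ) : Qf c ((c, t) : Pt n) = 0 := by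
  unfold Qf
  simp

/-- subtraction rule for `lapl` and `dt` -/
lemma lapl_dt_sub {O : Set (Pt n)} (hO : IsOpen O) {f g : Pt n → ℝ}
    (hf : ContDiffOn ℝ 2 f O) (hg : ContDiffOn ℝ 2 g O) {X : Pt n} (hX : X ∈ O) :
    lapl (fun Y => f Y - g Y) X = lapl f X - lapl g X ∧
    dt (fun Y => f Y - g Y) X = dt f X - dt g X := by
  have hfd : ∀ᶠ Y in 𝓝 X, DifferentiableAt ℝ f Y := by
    filter_upwards [hO.eventually_mem hX] with Y hY
    exact (hf.differentiableOn (by norm_num)).differentiableAt (hO.mem_nhds hY)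
  have hgd : ∀ᶠ Y in 𝓝 X, DifferentiableAt ℝ g Y := by
    filter_upwards [hO.eventually_mem hX] with Y hY
    exact (hg.differentiableOn (by norm_num)).differentiableAt (hO.mem_nhds hY)
  have hd2 : ∀ v, d2 (fun Y => f Y - g Y) X v = d2 f X v - d2 g X v := by
    intro v
    have h1 : (fun Y => fderiv ℝ (fun Z => f Z - g Z) Y v)
        =ᶠ[𝓝 X] (fun Y => fderiv ℝ f Y v - fderiv ℝ g Y v) := by
      filter_upwards [hfd, hgd] with Y h1 h2
      rw [fderiv_fun_sub h1 h2, ContinuousLinearMap.sub_apply]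
    have hDf : DifferentiableAt ℝ (fun Y => fderiv ℝ f Y v) X :=
      (((hf.fderiv_of_isOpen hO (by norm_num)).differentiableOn one_ne_zero).differentiableAt
        (hO.mem_nhds hX)).clm_apply (differentiableAt_const v)
    have hDg : DifferentiableAt ℝ (fun Y => fderiv ℝ g Y v) X :=
      (((hg.fderiv_of_isOpen hO (by norm_num)).differentiableOn one_ne_zero).differentiableAt
        (hO.mem_nhds hX)).clm_apply (differentiableAt_const v)
    show fderiv ℝ (fun Y => fderiv ℝ (fun Z => f Z - g Z) Y v) X v = _
    rw [h1.fderiv_eq, fderiv_fun_sub hDf hDg, ContinuousLinearMap.sub_apply]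
    rfl
  constructor
  · rw [lapl, lapl, lapl]
    rw [Finset.sum_congr rfl fun j _ => hd2 _, hd2, Finset.sum_sub_distrib]
    ring
  · rw [dt, dt, dt, fderiv_fun_sub (hfd.self_of_nhds) (hgd.self_of_nhds),
      ContinuousLinearMap.sub_apply]

lemma hsub_of (σ : ℝ) {O : Set (Pt n)} (hO : IsOpen O) {U g : Pt n → ℝ}
    (hU : ContDiffOn ℝ 2 U O) (hg : ContDiffOn ℝ 2 g O) {X : Pt n} (hX : X ∈ O)
    (hpde : lapl U X + ((1 - 2*σ)/X.2) * dt U X = 0)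
    (hbar : 0 < lapl g X + ((1 - 2*σ)/X.2) * dt g X) :
    lapl (fun Y => U Y - g Y) X + ((1 - 2*σ)/X.2) * dt (fun Y => U Y - g Y) X < 0 := by
  obtain ⟨h1, h2⟩ := lapl_dt_sub hO hU hg hX
  rw [h1, h2]
  nlinarith [hpde, hbar]

set_option maxHeartbeats 1000000 in
/-- Step A: lower bound near the bottom, via the cylinder barrier. -/
lemma stepA (σ : ℝ) (hσ0 : 0 < σ) (hσ1 : σ < 1)
    (U : Pt n → ℝ)
    (h₀ : ∀ X : Pt n, enorm' X ≤ 2 → 0 ≤ X.2 → 0 ≤ U X)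
    (hUc : ContinuousOn U {X : Pt n | enorm' X ≤ 2 ∧ 0 ≤ X.2})
    (hU2 : ContDiffOn ℝ 2 U {X : Pt n | enorm' X < 2 ∧ 0 < X.2})
    (hpde : ∀ X : Pt n, enorm' X < 2 → 0 < X.2 →
      lapl U X + ((1 - 2*σ)/X.2) * dt U X = 0)
    (m : ℝ) (hm : 0 ≤ m)
    (hmle : ∀ x : EuclideanSpace ℝ (Fin n), ‖x‖ < 2 → m ≤ U (x, 0))
    (bb ββ ττ : ℝ)
    (hbb : 4*(1-σ)*bb = 8*n) (hbbpos : 0 ≤ bb)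
    (hββ1 : bb ≤ ββ) (hββ2 : 4 + bb ≤ ββ)
    (hττpos : 0 < ττ) (hττhalf : ττ ≤ 1/2)
    (hττβ : ββ * ττ^(2*σ) ≤ 1/2)
    (x₀ : EuclideanSpace ℝ (Fin n)) (hx₀ : ‖x₀‖ ≤ 5/4) :
    ∀ t : ℝ, 0 < t → t ≤ ττ → m/2 ≤ U (x₀, t) := by
  intro t ht0 htτ
  suffices H : ∀ ε : ℝ, 0 < ε → m/2 - ε ≤ U (x₀, t) by
    by_contra hcon
    push_neg at hcon
    have := H ((m/2 - U (x₀,t))/2) (by linarith)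
    linarith
  intro ε hε
  set g := gA σ m bb ββ ε x₀ with hgdef
  have h2σ : (0:ℝ) < 2*σ := by linarith
  -- geometry
  have hKnorm : ∀ X : Pt n, ‖X.1 - x₀‖ ≤ 1/2 → ‖X.1‖ ≤ 7/4 := by
    intro X h1
    have h2 : ‖X.1 - x₀ + x₀‖ ≤ ‖X.1 - x₀‖ + ‖x₀‖ := norm_add_le _ _
    rw [sub_add_cancel] at h2
    linarith
  have hKenorm : Metric.closedBall x₀ (1/2) ×ˢ Set.Icc (0:ℝ) (1/2) ⊆
      {X : Pt n | enorm' X ≤ 2 ∧ 0 ≤ X.2} := by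
    intro X hX
    have h1 : ‖X.1 - x₀‖ ≤ 1/2 := by
      have := hX.1; rwa [Metric.mem_closedBall, dist_eq_norm] at this
    refine ⟨enorm'_le X (hKnorm X h1) hX.2.1 hX.2.2 ?_ (by norm_num), hX.2.1⟩
    norm_num
  have hOsub : Metric.ball x₀ (1/2) ×ˢ Set.Ioo (0:ℝ) (1/2) ⊆
      {X : Pt n | enorm' X < 2 ∧ 0 < X.2} := by
    intro X hX
    have h1 : ‖X.1 - x₀‖ ≤ 1/2 := by
      have := hX.1; rw [Metric.mem_ball, dist_eq_norm] at this; linarith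
    refine ⟨enorm'_lt X (hKnorm X h1) hX.2.1.le hX.2.2.le ?_ (by norm_num), hX.2.1⟩
    norm_num
  have hOt : Metric.ball x₀ (1/2) ×ˢ Set.Ioo (0:ℝ) (1/2) ⊆ {X : Pt n | 0 < X.2} :=
    fun X hX => hX.2.1
  have hOopen : IsOpen (Metric.ball x₀ (1/2) ×ˢ Set.Ioo (0:ℝ) (1/2)) :=
    Metric.isOpen_ball.prod isOpen_Ioo
  -- continuity / smoothness of the comparison function
  have hcontW : ContinuousOn (fun Y => U Y - g Y)
      (Metric.closedBall x₀ (1/2) ×ˢ Set.Icc (0:ℝ) (1/2)) :=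
    (hUc.mono hKenorm).sub (gA_continuous σ m bb ββ ε hσ0 x₀).continuousOn
  have hC2W : ContDiffOn ℝ 2 (fun Y => U Y - g Y)
      (Metric.ball x₀ (1/2) ×ˢ Set.Ioo (0:ℝ) (1/2)) :=
    (hU2.mono hOsub).sub (gA_contDiffOn σ m bb ββ ε x₀ hOt)
  -- strict supersolution property
  have hsubW : ∀ X ∈ Metric.ball x₀ (1/2) ×ˢ Set.Ioo (0:ℝ) (1/2),
      lapl (fun Y => U Y - g Y) X + ((1 - 2*σ)/X.2) * dt (fun Y => U Y - g Y) X < 0 := by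
    intro X hX
    have hXin := hOsub hX
    refine hsub_of σ hOopen (hU2.mono hOsub) (gA_contDiffOn σ m bb ββ ε x₀ hOt) hX
      (hpde X hXin.1 hXin.2) ?_
    rw [gA_L σ m bb ββ ε x₀ X hX.2.1]
    have he : -(8*m)*(n:ℝ) + 4*(1-σ)*(m*bb + ε) = m*(4*(1-σ)*bb - 8*(n:ℝ)) + 4*(1-σ)*ε := by
      ring
    rw [he, hbb]
    have h1 : 0 < 4*(1-σ)*ε := by nlinarith
    nlinarith
  -- boundary bound
  have hbdW : ∀ X ∈ ((Metric.closedBall x₀ (1/2) ×ˢ Set.Icc (0:ℝ) (1/2)) \ (Metric.ball x₀ (1/2) ×ˢ Set.Ioo (0:ℝ) (1/2))), -(ε/4) ≤ U X - g X := by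
    rintro X ⟨hXK, hXnO⟩
    have hX1 : ‖X.1 - x₀‖ ≤ 1/2 := by
      have := hXK.1; rwa [Metric.mem_closedBall, dist_eq_norm] at this
    have hX20 : 0 ≤ X.2 := hXK.2.1
    have hX22 : X.2 ≤ 1/2 := hXK.2.2
    have hUp : 0 ≤ U X := h₀ X (hKenorm hXK).1 hX20
    have hQnn : 0 ≤ Qf x₀ X := Qf_nonneg x₀ X
    have hrnn : 0 ≤ X.2^(2*σ) := Real.rpow_nonneg hX20 _
    have hwall : bb * X.2^2 ≤ ββ * X.2^(2*σ) := by
      rcases eq_or_lt_of_le hX20 with h0 | hpos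
      · rw [← h0]
        simp [Real.zero_rpow (ne_of_gt h2σ)]
      · have e : X.2^(2:ℕ) = X.2^(2*σ) * X.2^(2-2*σ) := by
          rw [← Real.rpow_add hpos, show (2*σ + (2-2*σ)) = ((2:ℕ):ℝ) by push_cast; ring,
            Real.rpow_natCast]
        have hle1 : X.2^(2-2*σ) ≤ 1 :=
          Real.rpow_le_one hpos.le (by linarith) (by linarith)
        have hrpos : 0 ≤ X.2^(2*σ) := Real.rpow_nonneg hpos.le _
        calc bb * X.2^2 = bb * (X.2^(2*σ) * X.2^(2-2*σ)) := by rw [← e]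
          _ ≤ bb * (X.2^(2*σ) * 1) := by
              apply mul_le_mul_of_nonneg_left _ hbbpos
              exact mul_le_mul_of_nonneg_left hle1 hrpos
          _ ≤ ββ * X.2^(2*σ) := by
              rw [mul_one]
              exact mul_le_mul_of_nonneg_right hββ1 hrpos
    -- decompose the boundary
    by_cases hball : X.1 ∈ Metric.ball x₀ (1/2)
    · -- X.2 = 0 or X.2 = 1/2
      have hIoo : X.2 ∉ Set.Ioo (0:ℝ) (1/2) := by
        intro hc
        exact hXnO ⟨hball, hc⟩
      have hcase : X.2 = 0 ∨ X.2 = 1/2 := by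
        rcases eq_or_lt_of_le hX20 with h0 | hpos
        · exact Or.inl h0.symm
        · rcases eq_or_lt_of_le hX22 with h1 | hlt
          · exact Or.inr h1
          · exact absurd ⟨hpos, hlt⟩ hIoo
      rcases hcase with h0 | h1
      · -- bottom
        have hzr : (X.2)^(2*σ) = (0:ℝ) := by
          rw [h0, Real.zero_rpow (ne_of_gt h2σ)]
        have hXX : ((X.1, (0:ℝ)) : Pt n) = X := by rw [← h0]
        have hUb : m ≤ U X := by
          rw [← hXX]
          exact hmle X.1 (lt_of_le_of_lt (hKnorm X hX1) (by norm_num))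
        have hgb : g X ≤ m := by
          rw [hgdef]
          show m - (4*m) * Qf x₀ X + (m*bb + ε) * X.2^2 - (m*ββ) * X.2 ^ (2*σ) ≤ m
          rw [hzr, h0]
          have : 0 ≤ (4*m) * Qf x₀ X := by positivity
          norm_num
          linarith
        linarith
      · -- top
        have hq : ((1/2:ℝ))^((2:ℝ)) ≤ (1/2:ℝ)^(2*σ) :=
          Real.rpow_le_rpow_of_exponent_ge (by norm_num) (by norm_num) (by linarith)
        have hq2 : ((1/2:ℝ))^((2:ℝ)) = 1/4 := by
          rw [show ((2:ℝ)) = ((2:ℕ):ℝ) by norm_num, Real.rpow_natCast]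
          norm_num
        have hββpos : (0:ℝ) ≤ ββ := by linarith
        have hgb : g X ≤ ε/4 := by
          rw [hgdef]
          show m - (4*m) * Qf x₀ X + (m*bb + ε) * X.2^2 - (m*ββ) * X.2 ^ (2*σ) ≤ ε/4
          rw [h1]
          have h3 : m*ββ*(1/4 : ℝ) ≤ m*ββ*((1/2:ℝ))^(2*σ) := by
            apply mul_le_mul_of_nonneg_left _ (mul_nonneg hm hββpos)
            rw [← hq2]; exact hq
          have h4 : 0 ≤ (4*m) * Qf x₀ X := by positivity
          nlinarith
        linarith
    · -- wall
      have hX1e : ‖X.1 - x₀‖ = 1/2 := by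
        rcases eq_or_lt_of_le hX1 with h | h
        · exact h
        · exact absurd (by rwa [Metric.mem_ball, dist_eq_norm]) hball
      have hQ : Qf x₀ X = 1/4 := by
        rw [Qf_eq, hX1e]; norm_num
      have hgb : g X ≤ ε/4 := by
        rw [hgdef]
        show m - (4*m) * Qf x₀ X + (m*bb + ε) * X.2^2 - (m*ββ) * X.2 ^ (2*σ) ≤ ε/4
        rw [hQ]
        have h5 : m * (bb * X.2^2) ≤ m * (ββ * X.2^(2*σ)) := mul_le_mul_of_nonneg_left hwall hm
        have h6 : ε * X.2^2 ≤ ε * (1/4:ℝ) := by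
          apply mul_le_mul_of_nonneg_left _ hε.le
          nlinarith
        nlinarith
      linarith
  -- apply the minimum principle
  have hmem : ((x₀, t) : Pt n) ∈ Metric.closedBall x₀ (1/2) ×ˢ Set.Icc (0:ℝ) (1/2) := by
    constructor
    · simp
    · exact ⟨ht0.le, le_trans htτ hττhalf⟩
  have hMP := minPrinciple σ hcontW hC2W hsubW hbdW ((x₀, t) : Pt n) hmem
  -- evaluate the barrier at (x₀, t)
  have hgval : m/2 - ε/4 ≤ g (x₀, t) := by
    rw [hgdef]
    show m/2 - ε/4 ≤ m - (4*m) * Qf x₀ ((x₀, t) : Pt n) + (m*bb + ε) * t^2 - (m*ββ) * t ^ (2*σ)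
    rw [Qf_self]
    have h1 : t^(2*σ) ≤ ττ^(2*σ) := Real.rpow_le_rpow ht0.le htτ (by linarith)
    have h2 : m*(ββ * t^(2*σ)) ≤ m*(1/2) := by
      apply mul_le_mul_of_nonneg_left _ hm
      calc ββ * t^(2*σ) ≤ ββ * ττ^(2*σ) := by
            apply mul_le_mul_of_nonneg_left h1 (by linarith)
        _ ≤ 1/2 := hττβ
    have h3 : 0 ≤ (m*bb + ε) * t^2 := by positivity
    nlinarith
  have := hMP
  nlinarith [this, hgval]

set_option maxHeartbeats 4000000 in
/-- Step B: propagate the lower bound upwards on the cylinder `B_{9/8} × [ττ, 3/2]`. -/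
lemma stepB (σ : ℝ) (hσ0 : 0 < σ) (hσ1 : σ < 1)
    (U : Pt n → ℝ)
    (h₀ : ∀ X : Pt n, enorm' X ≤ 2 → 0 ≤ X.2 → 0 ≤ U X)
    (hUc : ContinuousOn U {X : Pt n | enorm' X ≤ 2 ∧ 0 ≤ X.2})
    (hU2 : ContDiffOn ℝ 2 U {X : Pt n | enorm' X < 2 ∧ 0 < X.2})
    (hpde : ∀ X : Pt n, enorm' X < 2 → 0 < X.2 →
      lapl U X + ((1 - 2*σ)/X.2) * dt U X = 0)
    (m2 : ℝ) (hm2 : 0 ≤ m2)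
    (ττ : ℝ) (hττpos : 0 < ττ) (hττ25 : ττ ≤ 2/5)
    (hbase : ∀ x : EuclideanSpace ℝ (Fin n), ‖x‖ ≤ 9/8 → m2 ≤ U (x, ττ))
    (K k ββ cB : ℝ)
    (hKτ : K = 1/ττ)
    (hk : 1/ττ + ((n:ℝ)+2) ≤ k) (hknn : 0 ≤ k)
    (hββnn : 0 ≤ ββ)
    (hE32 : Real.exp (-(K*(3/2-ττ))) ≤ 1/2)
    (htop : Real.exp (-(k*(3/2-ττ))) ≤ ββ * (1 - Real.exp (-(K*(3/2-ττ)))))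
    (hcB2 : 2*cB = (17/81)^2 * Real.exp (-(k*(1-ττ))))
    (hball : ββ ≤ cB) :
    ∀ X : Pt n, ‖X.1‖ ≤ 1 → ττ ≤ X.2 → X.2 ≤ 1 → m2 * cB ≤ U X := by
  intro Z hZ1 hZ2 hZ3
  suffices H : ∀ ε : ℝ, 0 < ε → m2 * cB - 3*ε ≤ U Z by
    by_contra hcon
    push_neg at hcon
    have := H ((m2*cB - U Z)/6) (by linarith)
    linarith
  intro ε hε
  have hττ32 : ττ < 3/2 := by linarith
  set c₀ : ℝ := 81/64 with hc₀def
  set g := gB (n := n) m2 c₀ k K ττ ββ ε with hgdef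
  -- geometry
  have hKenorm : Metric.closedBall (0 : EuclideanSpace ℝ (Fin n)) (9/8) ×ˢ Set.Icc ττ (3/2) ⊆
      {X : Pt n | enorm' X ≤ 2 ∧ 0 ≤ X.2} := by
    intro X hX
    have h1 : ‖X.1‖ ≤ 9/8 := by
      have := hX.1; rwa [Metric.mem_closedBall, dist_zero_right] at this
    have h2 : 0 ≤ X.2 := le_trans hττpos.le hX.2.1
    refine ⟨enorm'_le X h1 h2 hX.2.2 ?_ (by norm_num), h2⟩
    norm_num
  have hOsub : Metric.ball (0 : EuclideanSpace ℝ (Fin n)) (9/8) ×ˢ Set.Ioo ττ (3/2) ⊆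
      {X : Pt n | enorm' X < 2 ∧ 0 < X.2} := by
    intro X hX
    have h1 : ‖X.1‖ ≤ 9/8 := by
      have := hX.1; rw [Metric.mem_ball, dist_zero_right] at this; linarith
    have h2 : 0 < X.2 := lt_trans hττpos hX.2.1
    refine ⟨enorm'_lt X h1 h2.le hX.2.2.le ?_ (by norm_num), h2⟩
    norm_num
  have hOopen : IsOpen (Metric.ball (0 : EuclideanSpace ℝ (Fin n)) (9/8) ×ˢ Set.Ioo ττ (3/2)) :=
    Metric.isOpen_ball.prod isOpen_Ioo
  -- continuity / smoothness
  have hcontW : ContinuousOn (fun Y => U Y - g Y)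
      (Metric.closedBall (0 : EuclideanSpace ℝ (Fin n)) (9/8) ×ˢ Set.Icc ττ (3/2)) :=
    (hUc.mono hKenorm).sub (gB_contDiff m2 c₀ k K ττ ββ ε).continuous.continuousOn
  have hC2W : ContDiffOn ℝ 2 (fun Y => U Y - g Y)
      (Metric.ball (0 : EuclideanSpace ℝ (Fin n)) (9/8) ×ˢ Set.Ioo ττ (3/2)) :=
    (hU2.mono hOsub).sub (gB_contDiff m2 c₀ k K ττ ββ ε).contDiffOn
  -- strict supersolution
  have hsubW : ∀ X ∈ Metric.ball (0 : EuclideanSpace ℝ (Fin n)) (9/8) ×ˢ Set.Ioo ττ (3/2),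
      lapl (fun Y => U Y - g Y) X + ((1 - 2*σ)/X.2) * dt (fun Y => U Y - g Y) X < 0 := by
    intro X hX
    have hXin := hOsub hX
    refine hsub_of σ hOopen (hU2.mono hOsub) (gB_contDiff m2 c₀ k K ττ ββ ε).contDiffOn hX
      (hpde X hXin.1 hXin.2) ?_
    have hb := gB_L σ m2 c₀ k K ττ ββ ε X hm2 hββnn (by norm_num) hττpos hX.2.1.le hσ0
      (le_of_eq hKτ.symm) hk
    have : 0 < 4*(1-σ)*ε := by nlinarith
    linarith
  -- boundary bound
  have hbdW : ∀ X ∈ ((Metric.closedBall (0 : EuclideanSpace ℝ (Fin n)) (9/8) ×ˢ Set.Icc ττ (3/2)) \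
      (Metric.ball (0 : EuclideanSpace ℝ (Fin n)) (9/8) ×ˢ Set.Ioo ττ (3/2))),
      -(3*ε) ≤ U X - g X := by
    rintro X ⟨hXK, hXnO⟩
    have hX1 : ‖X.1‖ ≤ 9/8 := by
      have := hXK.1; rwa [Metric.mem_closedBall, dist_zero_right] at this
    have hX2a : ττ ≤ X.2 := hXK.2.1
    have hX2b : X.2 ≤ 3/2 := hXK.2.2
    have hX20 : 0 ≤ X.2 := le_trans hττpos.le hX2a
    have hUp : 0 ≤ U X := h₀ X (hKenorm hXK).1 hX20
    have hq : Qf 0 X = ‖X.1‖^2 := by rw [Qf_eq, sub_zero]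
    have hq0 : 0 ≤ Qf 0 X := Qf_nonneg 0 X
    have hqc : Qf 0 X ≤ c₀ := by
      rw [hq, hc₀def]
      nlinarith [norm_nonneg X.1]
    have he2a : Real.exp (-(K*(X.2-ττ))) ≤ 1 := by
      rw [Real.exp_le_one_iff]
      have : 0 ≤ K := by rw [hKτ]; positivity
      nlinarith
    have he2b : 0 < Real.exp (-(K*(X.2-ττ))) := Real.exp_pos _
    have hεt : ε * X.2^2 ≤ 3*ε := by
      nlinarith [mul_le_mul_of_nonneg_left (show X.2^2 ≤ (9/4:ℝ) by nlinarith) hε.le]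
    have hsq : (c₀ - Qf 0 X)^2 ≤ c₀^2 := by nlinarith
    have he1pos : 0 < Real.exp (-(k*(X.2-ττ))) := Real.exp_pos _
    by_cases hball' : X.1 ∈ Metric.ball (0 : EuclideanSpace ℝ (Fin n)) (9/8)
    · have hIoo : X.2 ∉ Set.Ioo ττ (3/2) := fun hc => hXnO ⟨hball', hc⟩
      have hcase : X.2 = ττ ∨ X.2 = 3/2 := by
        rcases eq_or_lt_of_le hX2a with h0 | hpos
        · exact Or.inl h0.symm
        · rcases eq_or_lt_of_le hX2b with h1 | hlt
          · exact Or.inr h1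
          · exact absurd ⟨hpos, hlt⟩ hIoo
      rcases hcase with h0 | h1
      · -- bottom face : U ≥ m2, g ≤ m2 + 3ε
        have hUb : m2 ≤ U X := by
          have hXX : ((X.1, ττ) : Pt n) = X := by rw [← h0]
          rw [← hXX]
          exact hbase X.1 hX1
        have hgb : g X ≤ m2 + 3*ε := by
          rw [hgdef]
          show (m2/c₀^2) * ((c₀ - Qf 0 X)^2 * Real.exp (-(k*(X.2 - ττ))))
            - (m2*ββ) * (1 - Real.exp (-(K*(X.2 - ττ)))) + ε * X.2^2 ≤ m2 + 3*ε
          rw [h0]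
          simp only [sub_self, mul_zero, neg_zero, Real.exp_zero]
          have h2 : (m2/c₀^2) * ((c₀ - Qf 0 X)^2 * 1) ≤ m2 := by
            rw [mul_one]
            rw [div_mul_eq_mul_div, mul_comm]
            rw [div_le_iff₀ (by norm_num : (0:ℝ) < c₀^2)]
            nlinarith
          have h3 : 0 ≤ m2*ββ*(1-1) := by norm_num
          nlinarith [h2, mul_le_mul_of_nonneg_left (show ττ^2 ≤ (9/4:ℝ) by nlinarith) hε.le]
        linarith
      · -- top face
        have hgb : g X ≤ 3*ε := by
          rw [hgdef]
          show (m2/c₀^2) * ((c₀ - Qf 0 X)^2 * Real.exp (-(k*(X.2 - ττ))))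
            - (m2*ββ) * (1 - Real.exp (-(K*(X.2 - ττ)))) + ε * X.2^2 ≤ 3*ε
          rw [h1]
          have h2 : (m2/c₀^2) * ((c₀ - Qf 0 X)^2 * Real.exp (-(k*(3/2 - ττ))))
              ≤ m2 * (ββ * (1 - Real.exp (-(K*(3/2-ττ))))) := by
            have h3 : (m2/c₀^2) * ((c₀ - Qf 0 X)^2 * Real.exp (-(k*(3/2 - ττ))))
                ≤ (m2/c₀^2) * (c₀^2 * Real.exp (-(k*(3/2 - ττ)))) := by
              apply mul_le_mul_of_nonneg_left _ (by positivity)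
              exact mul_le_mul_of_nonneg_right hsq (Real.exp_pos _).le
            have h4 : (m2/c₀^2) * (c₀^2 * Real.exp (-(k*(3/2 - ττ))))
                = m2 * Real.exp (-(k*(3/2 - ττ))) := by
              field_simp
            rw [h4] at h3
            refine le_trans h3 ?_
            exact mul_le_mul_of_nonneg_left htop hm2
          have h5 : ε * (3/2:ℝ)^2 ≤ 3*ε := by nlinarith
          nlinarith
        linarith
    · -- wall
      have hX1e : ‖X.1‖ = 9/8 := by
        rcases eq_or_lt_of_le hX1 with h | h
        · exact h
        · exact absurd (by rwa [Metric.mem_ball, dist_zero_right]) hball'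
      have hQe : Qf 0 X = c₀ := by rw [hq, hX1e, hc₀def]; norm_num
      have hgb : g X ≤ 3*ε := by
        rw [hgdef]
        show (m2/c₀^2) * ((c₀ - Qf 0 X)^2 * Real.exp (-(k*(X.2 - ττ))))
          - (m2*ββ) * (1 - Real.exp (-(K*(X.2 - ττ)))) + ε * X.2^2 ≤ 3*ε
        rw [hQe]
        simp only [sub_self, ne_eq]
        have h2 : 0 ≤ (m2*ββ) * (1 - Real.exp (-(K*(X.2 - ττ)))) := by
          apply mul_nonneg (mul_nonneg hm2 hββnn)
          linarith
        have h3 : (0:ℝ)^2 * Real.exp (-(k*(X.2-ττ))) = 0 := by norm_num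
        nlinarith [hεt]
      linarith
  -- apply the minimum principle
  have hmem : (Z : Pt n) ∈ Metric.closedBall (0 : EuclideanSpace ℝ (Fin n)) (9/8) ×ˢ
      Set.Icc ττ (3/2) := by
    constructor
    · rw [Metric.mem_closedBall, dist_zero_right]; linarith
    · exact ⟨hZ2, by linarith⟩
  have hMP := minPrinciple σ hcontW hC2W hsubW hbdW Z hmem
  -- lower bound for the barrier at Z
  have hgval : m2 * cB - 0 ≤ g Z := by
    rw [hgdef]
    show m2 * cB - 0 ≤ (m2/c₀^2) * ((c₀ - Qf 0 Z)^2 * Real.exp (-(k*(Z.2 - ττ))))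
      - (m2*ββ) * (1 - Real.exp (-(K*(Z.2 - ττ)))) + ε * Z.2^2
    have hq : Qf 0 Z = ‖Z.1‖^2 := by rw [Qf_eq, sub_zero]
    have hq1 : Qf 0 Z ≤ 1 := by rw [hq]; nlinarith [norm_nonneg Z.1]
    have hq0 : 0 ≤ Qf 0 Z := Qf_nonneg 0 Z
    have hsq : (17/64:ℝ)^2 ≤ (c₀ - Qf 0 Z)^2 := by
      rw [hc₀def]
      nlinarith
    have hexp1 : Real.exp (-(k*(1 - ττ))) ≤ Real.exp (-(k*(Z.2 - ττ))) := by
      apply Real.exp_le_exp.2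
      nlinarith
    have hterm1 : m2 * (2*cB) ≤ (m2/c₀^2) * ((c₀ - Qf 0 Z)^2 * Real.exp (-(k*(Z.2 - ττ)))) := by
      rw [hcB2]
      have h1 : (17/64:ℝ)^2 * Real.exp (-(k*(1 - ττ)))
          ≤ (c₀ - Qf 0 Z)^2 * Real.exp (-(k*(Z.2 - ττ))) := by
        apply mul_le_mul hsq hexp1 (Real.exp_pos _).le (by positivity)
      calc m2 * ((17/81)^2 * Real.exp (-(k*(1 - ττ))))
          = (m2/c₀^2) * ((17/64:ℝ)^2 * Real.exp (-(k*(1 - ττ)))) := by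
            rw [hc₀def]; ring
        _ ≤ _ := mul_le_mul_of_nonneg_left h1 (by positivity)
    have hterm2 : (m2*ββ) * (1 - Real.exp (-(K*(Z.2 - ττ)))) ≤ m2 * cB := by
      have h1 : (1 - Real.exp (-(K*(Z.2 - ττ)))) ≤ 1 := by
        have := Real.exp_pos (-(K*(Z.2 - ττ))); linarith
      have h2 : 0 ≤ 1 - Real.exp (-(K*(Z.2 - ττ))) := by
        have : Real.exp (-(K*(Z.2 - ττ))) ≤ 1 := by
          rw [Real.exp_le_one_iff]
          have : (0:ℝ) ≤ K := by rw [hKτ]; positivity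
          nlinarith
        linarith
      calc (m2*ββ) * (1 - Real.exp (-(K*(Z.2 - ττ)))) ≤ (m2*ββ) * 1 :=
            mul_le_mul_of_nonneg_left h1 (mul_nonneg hm2 hββnn)
        _ = m2 * ββ := by ring
        _ ≤ m2 * cB := mul_le_mul_of_nonneg_left hball hm2
    nlinarith [sq_nonneg Z.2, hε]
  nlinarith [hMP, hgval]

end S12

set_option maxHeartbeats 1000000 in
/-- There is `c = c(n,σ) > 0` such that every nonnegative solution of
the degenerate equation on `𝔅_2^+`, continuous up to the boundary, satisfies
`inf_{𝔅_1^+} U ≥ c · inf_{B_2} u`. -/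
theorem stmt_12 (n : ℕ) (hn : 2 ≤ n) (σ : ℝ) (hσ : σ ∈ Set.Ioo (0 : ℝ) 1) :
    ∃ c : ℝ, 0 < c ∧
      ∀ U : Pt n → ℝ,
        (∀ X : Pt n, enorm' X ≤ 2 → 0 ≤ X.2 → 0 ≤ U X) →
        ContinuousOn U {X : Pt n | enorm' X ≤ 2 ∧ 0 ≤ X.2} →
        ContDiffOn ℝ 2 U {X : Pt n | enorm' X < 2 ∧ 0 < X.2} →
        (∀ X : Pt n, enorm' X < 2 → 0 < X.2 →
          lapl U X + ((1 - 2 * σ) / X.2) * dt U X = 0) →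
        c * sInf ((fun x : EuclideanSpace ℝ (Fin n) => U (x, 0)) '' {x | ‖x‖ < 2}) ≤
          sInf (U '' {X : Pt n | enorm' X < 1 ∧ 0 < X.2}) := by
  obtain ⟨hσ0, hσ1⟩ := hσ
  have h1σ : (0:ℝ) < 1 - σ := by linarith
  have hncast : (2:ℝ) ≤ (n:ℝ) := by exact_mod_cast hn
  set bb : ℝ := 2*n/(1-σ) with hbbdef
  set ββA : ℝ := 4*(1+bb) with hββAdef
  set ττ : ℝ := (2*ββA) ^ (-(1/(2*σ))) with hττdef
  have hbb4 : 4 ≤ bb := by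
    rw [hbbdef, le_div_iff₀ h1σ]
    nlinarith
  have hbbpos : 0 ≤ bb := by linarith
  have hbbL : 4*(1-σ)*bb = 8*(n:ℝ) := by
    rw [hbbdef]
    field_simp
    ring
  have hββ1 : bb ≤ ββA := by rw [hββAdef]; linarith
  have hββ2 : 4 + bb ≤ ββA := by rw [hββAdef]; linarith
  have hββA20 : 20 ≤ ββA := by rw [hββAdef]; linarith
  have h2β : (0:ℝ) < 2*ββA := by linarith
  have hττpos : 0 < ττ := Real.rpow_pos_of_pos h2β _
  have hττ2σ : ττ ^ (2*σ) = 1/(2*ββA) := by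
    rw [hττdef, ← Real.rpow_mul h2β.le,
      show -(1/(2*σ))*(2*σ) = -1 by field_simp, Real.rpow_neg_one]
    rw [inv_eq_one_div]
  have hττβ : ββA * ττ^(2*σ) = 1/2 := by
    rw [hττ2σ]
    field_simp
  have hττ25 : ττ ≤ 2/5 := by
    by_contra hcon
    push_neg at hcon
    have h1 : ((2:ℝ)/5) ^ (2*σ) < ττ ^ (2*σ) :=
      Real.rpow_lt_rpow (by norm_num) hcon (by linarith)
    have h2 : ((2:ℝ)/5) ^ ((2:ℝ)) ≤ ((2:ℝ)/5) ^ (2*σ) :=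
      Real.rpow_le_rpow_of_exponent_ge (by norm_num) (by norm_num) (by linarith)
    have h3 : ((2:ℝ)/5) ^ ((2:ℝ)) = 4/25 := by
      rw [show ((2:ℝ)) = ((2:ℕ):ℝ) by norm_num, Real.rpow_natCast]
      norm_num
    rw [hττ2σ] at h1
    have h4 : 1/(2*ββA) ≤ 1/40 := by
      apply one_div_le_one_div_of_le (by norm_num)
      linarith
    linarith
  have hττhalf : ττ ≤ 1/2 := by linarith
  set K : ℝ := 1/ττ with hKdef
  set k : ℝ := 1/ττ + (n:ℝ) + 20 with hkdef
  set ββB : ℝ := 2*Real.exp (-(k*(3/2 - ττ))) with hββBdef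
  set cB : ℝ := (17/81)^2 * Real.exp (-(k*(1 - ττ)))/2 with hcBdef
  have hττinv : (5/2:ℝ) ≤ 1/ττ := by
    rw [one_div]
    have := one_div_le_one_div_of_le hττpos hττ25
    norm_num at this
    exact this
  have hk24 : (24:ℝ) ≤ k := by rw [hkdef]; linarith
  have hknn : (0:ℝ) ≤ k := by linarith
  have hkk : 1/ττ + ((n:ℝ)+2) ≤ k := by rw [hkdef]; linarith
  have hββBnn : 0 ≤ ββB := by rw [hββBdef]; positivity
  have hE32 : Real.exp (-(K*(3/2-ττ))) ≤ 1/2 := by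
    have hmul : (5/2:ℝ)*(11/10) ≤ (1/ττ)*(3/2-ττ) := by
      apply mul_le_mul hττinv (by linarith) (by norm_num) (by linarith)
    have h1 : (1:ℝ) ≤ K*(3/2-ττ) := by
      rw [hKdef]
      linarith
    have h2 : Real.exp (-(K*(3/2-ττ))) ≤ Real.exp (-1) :=
      Real.exp_le_exp.2 (by linarith)
    have h3 : (2:ℝ) ≤ Real.exp 1 := by
      have := Real.add_one_le_exp 1
      linarith
    have h4 : Real.exp (-1:ℝ) ≤ 1/2 := by
      rw [Real.exp_neg, ← one_div]
      have := one_div_le_one_div_of_le (by norm_num : (0:ℝ) < 2) h3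
      linarith
    linarith
  have htop : Real.exp (-(k*(3/2-ττ))) ≤ ββB * (1 - Real.exp (-(K*(3/2-ττ)))) := by
    rw [hββBdef]
    nlinarith [Real.exp_pos (-(k*(3/2-ττ)))]
  have hcB2 : 2*cB = (17/81)^2 * Real.exp (-(k*(1-ττ))) := by rw [hcBdef]; ring
  have hball : ββB ≤ cB := by
    rw [hββBdef, hcBdef]
    have hsplit : Real.exp (-(k*(3/2-ττ))) = Real.exp (-(k*(1-ττ))) * Real.exp (-(k/2)) := by
      rw [← Real.exp_add]
      congr 1
      ring
    rw [hsplit]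
    have hE : Real.exp (-(k/2)) ≤ 1/256 := by
      have h2 : Real.exp (-(k/2)) ≤ Real.exp (-12:ℝ) := Real.exp_le_exp.2 (by linarith)
      have h4 : (4:ℝ) ≤ Real.exp 3 := by
        have := Real.add_one_le_exp 3
        linarith
      have h5 : Real.exp (((4:ℕ):ℝ) * (3:ℝ)) = Real.exp 3 ^ 4 := Real.exp_nat_mul 3 4
      have h6 : Real.exp (12:ℝ) = Real.exp 3 ^ 4 := by rw [← h5]; norm_num
      have h3 : (256:ℝ) ≤ Real.exp 12 := by
        rw [h6]
        calc (256:ℝ) = 4^4 := by norm_num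
          _ ≤ Real.exp 3 ^ 4 := by
              apply pow_le_pow_left₀ (by norm_num) h4
      have h7 : Real.exp (-12:ℝ) ≤ 1/256 := by
        rw [Real.exp_neg, ← one_div]
        have := one_div_le_one_div_of_le (by norm_num : (0:ℝ) < 256) h3
        linarith
      linarith
    nlinarith [Real.exp_pos (-(k*(1-ττ)))]
  have hcBpos : 0 < cB := by rw [hcBdef]; positivity
  have hcB1 : cB ≤ 1/2 := by
    rw [hcBdef]
    have h1 : Real.exp (-(k*(1-ττ))) ≤ 1 := by
      rw [Real.exp_le_one_iff]
      nlinarith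
    nlinarith [Real.exp_pos (-(k*(1-ττ)))]
  refine ⟨cB/2, div_pos hcBpos two_pos, ?_⟩
  intro U h₀ hUc hU2 hpde
  set S1 := (fun x : EuclideanSpace ℝ (Fin n) => U (x, 0)) '' {x | ‖x‖ < 2} with hS1
  set S2 := U '' {X : Pt n | enorm' X < 1 ∧ 0 < X.2} with hS2
  set m := sInf S1 with hm
  have hX₀mem : ((0 : EuclideanSpace ℝ (Fin n)), (1/2:ℝ)) ∈
      {X : Pt n | enorm' X < 1 ∧ 0 < X.2} := by
    constructor
    · exact S12.enorm'_lt _ (le_of_eq norm_zero) (by norm_num) (le_refl (1/2:ℝ))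
        (by norm_num) (by norm_num)
    · norm_num
  have hS2ne : S2.Nonempty := ⟨_, _, hX₀mem, rfl⟩
  have hS2lb : ∀ y ∈ S2, (0:ℝ) ≤ y := by
    rintro y ⟨X, hX, rfl⟩
    exact h₀ X (by have := hX.1; linarith) hX.2.le
  by_cases hmcase : m ≤ 0
  · have h1 : cB/2 * m ≤ 0 := mul_nonpos_of_nonneg_of_nonpos (by positivity) hmcase
    have h2 : 0 ≤ sInf S2 := le_csInf hS2ne hS2lb
    linarith
  push_neg at hmcase
  have hmnn : 0 ≤ m := hmcase.le
  have hS1bdd : BddBelow S1 := by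
    refine ⟨0, ?_⟩
    rintro y ⟨x, hx, rfl⟩
    refine h₀ (x, 0) ?_ (le_refl 0)
    exact S12.enorm'_le _ (le_of_lt hx) (le_refl 0) (le_refl 0) (by norm_num) (by norm_num)
  have hmle : ∀ x : EuclideanSpace ℝ (Fin n), ‖x‖ < 2 → m ≤ U (x, 0) := fun x hx =>
    csInf_le hS1bdd ⟨x, hx, rfl⟩
  have hA : ∀ x₀ : EuclideanSpace ℝ (Fin n), ‖x₀‖ ≤ 5/4 →
      ∀ t : ℝ, 0 < t → t ≤ ττ → m/2 ≤ U (x₀, t) := fun x₀ hx₀ =>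
    S12.stepA σ hσ0 hσ1 U h₀ hUc hU2 hpde m hmnn hmle bb ββA ττ
      hbbL hbbpos hββ1 hββ2 hττpos hττhalf (le_of_eq hττβ) x₀ hx₀
  have hB0 : ∀ x : EuclideanSpace ℝ (Fin n), ‖x‖ ≤ 9/8 → m/2 ≤ U (x, ττ) := fun x hx =>
    hA x (by linarith) ττ hττpos (le_refl ττ)
  have hB := S12.stepB σ hσ0 hσ1 U h₀ hUc hU2 hpde (m/2) (by linarith) ττ hττpos hττ25 hB0
      K k ββB cB hKdef hkk hknn hββBnn hE32 htop hcB2 hball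
  have hmain : ∀ X : Pt n, X ∈ {X : Pt n | enorm' X < 1 ∧ 0 < X.2} → cB/2 * m ≤ U X := by
    intro X hX
    have hx1 : ‖X.1‖ ≤ 1 := le_of_lt (lt_of_le_of_lt (S12.norm_fst_le_enorm' X) hX.1)
    have ht1 : X.2 ≤ 1 := le_of_lt (lt_of_le_of_lt (S12.snd_le_enorm' X) hX.1)
    rcases le_or_gt X.2 ττ with hcase | hcase
    · have h1 := hA X.1 (by linarith) X.2 hX.2 hcase
      rw [Prod.mk.eta] at h1
      nlinarith
    · have h1 := hB X hx1 hcase.le ht1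
      nlinarith
  exact le_csInf hS2ne (by rintro y ⟨X, hX, rfl⟩; exact hmain X hX)
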